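/- For P the uniform distribution on the closed Euclidean ball in ℝ^d centered at the origin with radius √(d+2), θ⋆ ∈ ℝ^d with ‖θ⋆‖ = 1, and 0 < L < 1, the unique minimizer over {θ : ‖θ‖ ≤ L} of the population risk E_{x∼P}[(⟨θ, x⟩ − ⟨θ⋆, x⟩)²] is θ_∞ = L θ⋆; moreover this population risk equals ‖θ − θ⋆‖² for every θ, so its minimum value over the constraint set is (1 − L)². -/

import Mathlib

open MeasureTheory
open scoped RealInnerProductSpace

/-- Uniform probability distribution on the closed Euclidean ball of radius `√(d+2)`
centered at the origin in `ℝ^d`. -/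
noncomputable def uniformBall (d : ℕ) : Measure (EuclideanSpace ℝ (Fin d)) :=
  (volume (Metric.closedBall (0 : EuclideanSpace ℝ (Fin d)) (Real.sqrt (d + 2))))⁻¹ •
    volume.restrict (Metric.closedBall (0 : EuclideanSpace ℝ (Fin d)) (Real.sqrt (d + 2)))

/-- The population risk `E_{x∼P}[(⟨θ, x⟩ − ⟨θ⋆, x⟩)²]` for `P` the uniform
distribution on the ball of radius `√(d+2)`. -/
noncomputable def popRisk (d : ℕ) (θstar θ : EuclideanSpace ℝ (Fin d)) : ℝ :=
  ∫ x, (⟪θ, x⟫ - ⟪θstar, x⟫) ^ 2 ∂(uniformBall d)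

namespace PopRiskAux

open Metric Set

variable {d : ℕ}

noncomputable def ballIntSq (d : ℕ) (v : EuclideanSpace ℝ (Fin d)) : ℝ :=
  ∫ x in closedBall (0 : EuclideanSpace ℝ (Fin d)) (Real.sqrt (d + 2)), ⟪v, x⟫ ^ 2

lemma ballIntSq_isometry (f : EuclideanSpace ℝ (Fin d) ≃ₗᵢ[ℝ] EuclideanSpace ℝ (Fin d))
    (v : EuclideanSpace ℝ (Fin d)) : ballIntSq d (f v) = ballIntSq d v := by
  have hpre : f ⁻¹' (closedBall (0 : EuclideanSpace ℝ (Fin d)) (Real.sqrt (d + 2))) =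
      closedBall 0 (Real.sqrt (d + 2)) := by
    ext x
    simp [mem_closedBall_zero_iff, f.norm_map]
  have := (f.measurePreserving).setIntegral_preimage_emb
    (f.toHomeomorph.measurableEmbedding)
    (fun y => ⟪f v, y⟫ ^ 2) (closedBall (0 : EuclideanSpace ℝ (Fin d)) (Real.sqrt (d + 2)))
  rw [hpre] at this
  unfold ballIntSq
  rw [← this]
  simp [f.inner_map_map]

lemma ballIntSq_norm_eq {v w : EuclideanSpace ℝ (Fin d)} (h : ‖v‖ = ‖w‖) :
    ballIntSq d v = ballIntSq d w := by
  have := ballIntSq_isometry (Submodule.reflection (ℝ ∙ (v - w))ᗮ) v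
  rw [Submodule.reflection_sub h] at this; exact this.symm

lemma ballIntSq_smul (c : ℝ) (v : EuclideanSpace ℝ (Fin d)) :
    ballIntSq d (c • v) = c ^ 2 * ballIntSq d v := by
  unfold ballIntSq
  rw [← integral_const_mul]
  congr 1; ext x
  rw [real_inner_smul_left]; ring

lemma integrableOn_inner_sq (v : EuclideanSpace ℝ (Fin d)) :
    IntegrableOn (fun x => ⟪v, x⟫ ^ 2)
      (closedBall (0 : EuclideanSpace ℝ (Fin d)) (Real.sqrt (d + 2))) volume := by
  have hc : Continuous fun x : EuclideanSpace ℝ (Fin d) => ⟪v, x⟫ ^ 2 :=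
    (continuous_const.inner continuous_id).pow 2
  exact hc.continuousOn.integrableOn_compact (isCompact_closedBall _ _)

lemma integral_normsq_ball (d : ℕ) (hd : 1 ≤ d) :
    ∫ x in closedBall (0 : EuclideanSpace ℝ (Fin d)) (Real.sqrt (d + 2)), ‖x‖ ^ 2
      = (volume (closedBall (0 : EuclideanSpace ℝ (Fin d)) (Real.sqrt (d + 2)))).toReal * d := by
  haveI : Nonempty (Fin d) := ⟨⟨0, hd⟩⟩
  haveI : Nontrivial (EuclideanSpace ℝ (Fin d)) :=
    ⟨0, EuclideanSpace.single ⟨0, hd⟩ 1, by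
      intro h
      have := congrArg (fun v : EuclideanSpace ℝ (Fin d) => ‖v‖) h
      simp [EuclideanSpace.norm_single] at this⟩
  set R := Real.sqrt (d + 2) with hRdef
  have hR : 0 ≤ R := Real.sqrt_nonneg _
  have hR2 : R ^ 2 = (d : ℝ) + 2 := Real.sq_sqrt (by positivity)
  have h1 : ∫ x in closedBall (0 : EuclideanSpace ℝ (Fin d)) R, ‖x‖ ^ 2
      = ∫ x : EuclideanSpace ℝ (Fin d), Set.indicator (Set.Iic R) (fun r => r ^ 2) ‖x‖ := by
    rw [← integral_indicator measurableSet_closedBall]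
    congr 1; ext x
    by_cases hx : ‖x‖ ≤ R <;>
      simp [Set.indicator, mem_closedBall_zero_iff, hx]
  rw [h1, integral_fun_norm_addHaar volume (Set.indicator (Set.Iic R) (fun r => r ^ 2))]
  have hdim : Module.finrank ℝ (EuclideanSpace ℝ (Fin d)) = d := by
    simp [finrank_euclideanSpace]
  rw [hdim]
  have h2 : ∫ y in Set.Ioi (0 : ℝ), y ^ (d - 1) • Set.indicator (Set.Iic R) (fun r => r ^ 2) y
      = R ^ (d + 2) / (d + 2) := by
    have hfun : ∀ y : ℝ, y ^ (d - 1) • Set.indicator (Set.Iic R) (fun r => r ^ 2) y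
        = Set.indicator (Set.Iic R) (fun y => y ^ (d + 1)) y := by
      intro y
      have he : d - 1 + 2 = d + 1 := by omega
      by_cases hy : y ∈ Set.Iic R <;>
        simp [Set.indicator, hy, smul_eq_mul, ← pow_add, he]
    simp_rw [hfun]
    rw [setIntegral_indicator measurableSet_Iic]
    have hset : Set.Ioi (0 : ℝ) ∩ Set.Iic R = Set.Ioc 0 R := by
      ext y; simp [and_comm]
    rw [hset, ← intervalIntegral.integral_of_le hR, integral_pow]
    push_cast
    ring_nf
  rw [h2, Measure.addHaar_closedBall volume 0 hR]
  rw [ENNReal.toReal_mul, ENNReal.toReal_ofReal (by positivity)]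
  have hRp : R ^ (d + 2) = R ^ d * ((d : ℝ) + 2) := by
    rw [pow_add, hR2]
  rw [hRp, nsmul_eq_mul, smul_eq_mul]
  have : ((d : ℝ) + 2) ≠ 0 := by positivity
  field_simp
  rw [hdim, measureReal_def]; ring

lemma ballIntSq_unit (d : ℕ) (hd : 1 ≤ d) {u : EuclideanSpace ℝ (Fin d)} (hu : ‖u‖ = 1) :
    ballIntSq d u
      = (volume (closedBall (0 : EuclideanSpace ℝ (Fin d)) (Real.sqrt (d + 2)))).toReal := by
  haveI : Nonempty (Fin d) := ⟨⟨0, hd⟩⟩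
  set b : OrthonormalBasis (Fin d) ℝ (EuclideanSpace ℝ (Fin d)) :=
    EuclideanSpace.basisFun (Fin d) ℝ
  have hsum : ∑ i : Fin d, ballIntSq d (b i)
      = ∫ x in closedBall (0 : EuclideanSpace ℝ (Fin d)) (Real.sqrt (d + 2)), ‖x‖ ^ 2 := by
    unfold ballIntSq
    rw [← integral_finset_sum _ (fun i _ => integrableOn_inner_sq (b i))]
    refine setIntegral_congr_fun measurableSet_closedBall (fun x _ => ?_)
    have := b.sum_inner_mul_inner x x
    calc ∑ i : Fin d, ⟪b i, x⟫ ^ 2 = ∑ i : Fin d, ⟪x, b i⟫ * ⟪b i, x⟫ := by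
          refine Finset.sum_congr rfl (fun i _ => ?_)
          rw [real_inner_comm x (b i)]; ring
      _ = ⟪x, x⟫ := this
      _ = ‖x‖ ^ 2 := real_inner_self_eq_norm_sq x
  have heach : ∀ i : Fin d, ballIntSq d (b i) = ballIntSq d u := by
    intro i
    exact ballIntSq_norm_eq (by rw [b.orthonormal.1 i, hu])
  rw [Finset.sum_congr rfl (fun i _ => heach i), Finset.sum_const, Finset.card_univ,
    Fintype.card_fin, integral_normsq_ball d hd, nsmul_eq_mul] at hsum
  have hd' : (d : ℝ) ≠ 0 := Nat.cast_ne_zero.mpr (by omega)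
  refine mul_left_cancel₀ hd' ?_
  rw [hsum]; ring

end PopRiskAux


/-- **Population minimizer:** the population risk equals `‖θ − θ⋆‖²` for every `θ`;
`θ_∞ = L θ⋆` minimizes it over `{θ : ‖θ‖ ≤ L}`, it is the unique such minimizer,
and the minimum value is `(1 − L)²`. -/
theorem population_risk_minimizer
    (d : ℕ) (hd : 1 ≤ d)
    (θstar : EuclideanSpace ℝ (Fin d)) (L : ℝ)
    (hθstar : ‖θstar‖ = 1) (hL0 : 0 < L) (hL1 : L < 1) :
    (∀ θ : EuclideanSpace ℝ (Fin d), popRisk d θstar θ = ‖θ - θstar‖ ^ 2) ∧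
    (∀ θ : EuclideanSpace ℝ (Fin d), ‖θ‖ ≤ L →
      popRisk d θstar (L • θstar) ≤ popRisk d θstar θ) ∧
    (∀ θ : EuclideanSpace ℝ (Fin d), ‖θ‖ ≤ L →
      popRisk d θstar θ = popRisk d θstar (L • θstar) → θ = L • θstar) ∧
    popRisk d θstar (L • θstar) = (1 - L) ^ 2 := by
  open PopRiskAux Metric in
  have hRpos : 0 < Real.sqrt (d + 2) := Real.sqrt_pos.mpr (by positivity)
  set V := volume (closedBall (0 : EuclideanSpace ℝ (Fin d)) (Real.sqrt (d + 2))) with hV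
  have hV0 : V ≠ 0 :=
    ((measure_ball_pos volume 0 hRpos).trans_le (measure_mono ball_subset_closedBall)).ne'
  have hVtop : V ≠ ⊤ := measure_closedBall_lt_top.ne
  have key : ∀ θ : EuclideanSpace ℝ (Fin d), popRisk d θstar θ = ‖θ - θstar‖ ^ 2 := by
    intro θ
    have h1 : popRisk d θstar θ = (V⁻¹).toReal * ballIntSq d (θ - θstar) := by
      unfold popRisk uniformBall ballIntSq
      rw [integral_smul_measure]
      simp only [smul_eq_mul]
      congr 1
      refine setIntegral_congr_fun measurableSet_closedBall (fun x _ => ?_)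
      rw [inner_sub_left]
    have h2 : ballIntSq d (θ - θstar) = ‖θ - θstar‖ ^ 2 * V.toReal := by
      have hn : ‖θ - θstar‖ = ‖(‖θ - θstar‖ : ℝ) • θstar‖ := by
        rw [norm_smul, hθstar, mul_one, Real.norm_eq_abs, abs_norm]
      rw [ballIntSq_norm_eq hn, ballIntSq_smul, ballIntSq_unit d hd hθstar]
    rw [h1, h2, ENNReal.toReal_inv]
    have hVt : V.toReal ≠ 0 := by
      simp [ENNReal.toReal_ne_zero, hV0, hVtop]
    field_simp
  have hLstar : ‖L • θstar - θstar‖ = 1 - L := by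
    have : L • θstar - θstar = (L - 1) • θstar := by
      rw [sub_smul, one_smul]
    rw [this, norm_smul, hθstar, mul_one, Real.norm_eq_abs, abs_of_neg (by linarith)]
    ring
  refine ⟨key, ?_, ?_, ?_⟩
  · intro θ hθ
    rw [key, key, hLstar]
    have h1 : 1 - L ≤ ‖θ - θstar‖ := by
      have := norm_sub_norm_le θstar θ
      rw [hθstar, norm_sub_rev] at this
      linarith
    have : (0:ℝ) ≤ 1 - L := by linarith
    nlinarith [norm_nonneg (θ - θstar)]
  · intro θ hθ heq
    rw [key, key, hLstar] at heq
    have hsub : ‖θ - L • θstar‖ ^ 2 = 0 := by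
      have e1 : ‖θ - θstar‖ ^ 2 = ‖θ‖ ^ 2 - 2 * ⟪θ, θstar⟫ + ‖θstar‖ ^ 2 :=
        norm_sub_sq_real θ θstar
      have e2 : ‖θ - L • θstar‖ ^ 2 = ‖θ‖ ^ 2 - 2 * ⟪θ, L • θstar⟫ + ‖L • θstar‖ ^ 2 :=
        norm_sub_sq_real θ (L • θstar)
      have e3 : ⟪θ, L • θstar⟫ = L * ⟪θ, θstar⟫ := real_inner_smul_right θ θstar L
      have e4 : ‖L • θstar‖ = L := by
        rw [norm_smul, hθstar, mul_one, Real.norm_eq_abs, abs_of_pos hL0]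
      have hθ2 : ‖θ‖ ^ 2 ≤ L ^ 2 := by
        nlinarith [norm_nonneg θ]
      have hθstar2 : ‖θstar‖ ^ 2 = 1 := by rw [hθstar]; norm_num
      have ht : 2 * ⟪θ, θstar⟫ = ‖θ‖ ^ 2 + 2 * L - L ^ 2 := by
        linear_combination e1 - heq + hθstar2
      have e5 : ‖θ - L • θstar‖ ^ 2 = ‖θ‖ ^ 2 - 2 * (L * ⟪θ, θstar⟫) + L ^ 2 := by
        rw [e2, e3, e4]
      have e6 : ‖θ - L • θstar‖ ^ 2 = (1 - L) * (‖θ‖ ^ 2 - L ^ 2) := by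
        rw [e5]; linear_combination (-L) * ht
      nlinarith [sq_nonneg ‖θ - L • θstar‖]
    have : θ - L • θstar = 0 := by
      have := pow_eq_zero_iff (n := 2) (by norm_num) |>.mp hsub
      exact norm_eq_zero.mp this
    exact sub_eq_zero.mp this
  · rw [key, hLstar]
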